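/- Let C be a resolving subcategory of a triangulated category D that is closed under direct summands, and let ⟨C⟩_+ = { X | X ≅ C[n], C ∈ C, n ≥ 0 }. Then ⟨C⟩_+ coincides with the class of objects L admitting a finite C-resolution, i.e., objects L for which there exist triangles L_{k+1} → X_k → L_k → with L_0 = L, L_{n+1} = 0, and all X_k ∈ C for some n ≥ 0. -/

import Mathlib

open CategoryTheory Limits Pretriangulated

universe v u

variable {C : Type u} [Category.{v} C] [Preadditive C] [HasZeroObject C]
  [HasShift C ℤ] [∀ n : ℤ, (shiftFunctor C n).Additive] [Pretriangulated C]

/-- `⟨S⟩₊`: objects isomorphic to `Y⟦n⟧` for some `Y ∈ S` and some integer `n ≥ 0`. -/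
def plusClosure (S : Set C) : Set C :=
  {X : C | ∃ Y ∈ S, ∃ n : ℕ, Nonempty (X ≅ Y⟦(n : ℤ)⟧)}

/-- `L` has a finite `S`-resolution: there are triangles `L_{k+1} → X_k → L_k → L_{k+1}⟦1⟧`
(`0 ≤ k ≤ n`) with `L_0 = L`, `L_{n+1} = 0` and all `X_k ∈ S`. -/
def hasFiniteRes (S : Set C) (L : C) : Prop :=
  ∃ (n : ℕ) (Ls : ℕ → C) (Xs : ℕ → C), Ls 0 = L ∧ IsZero (Ls (n + 1)) ∧
    ∀ k ≤ n, Xs k ∈ S ∧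
      ∃ (u : Ls (k + 1) ⟶ Xs k) (v : Xs k ⟶ Ls k) (w : Ls k ⟶ (Ls (k + 1))⟦(1 : ℤ)⟧),
        Triangle.mk u v w ∈ distTriang C

open ZeroObject

set_option linter.unusedSectionVars false

section aux


variable (S : Set C)
    (hiso : ∀ (X Y : C), (X ≅ Y) → X ∈ S → Y ∈ S)
    (hzero : ∀ X : C, IsZero X → X ∈ S)
    (hext : ∀ T ∈ distTriang C, T.obj₁ ∈ S → T.obj₃ ∈ S → T.obj₂ ∈ S)
    (hshift : ∀ X : C, X ∈ S → X⟦(-1 : ℤ)⟧ ∈ S)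

include hiso hshift in
lemma negShiftMem (k : ℕ) (X : C) (hX : X ∈ S) : X⟦(-(k : ℤ))⟧ ∈ S := by
  induction k with
  | zero =>
      exact hiso X _ (show X ≅ X⟦(-(0:ℕ) : ℤ)⟧ from
        ((shiftFunctorZero C ℤ).app X).symm ≪≫ eqToIso (by norm_num)) hX
  | succ k ih =>
      refine hiso _ _ ?_ (hshift _ ih)
      exact ((shiftFunctorAdd' C (-(k : ℤ)) (-1) (-((k+1 : ℕ) : ℤ)) (by push_cast; ring)).app
        X).symm

include hiso hext hshift in
lemma keyStep {A X B : C} (hX : X ∈ S) (hA : A ∈ plusClosure S)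
    (u : A ⟶ X) (v : X ⟶ B) (w : B ⟶ A⟦(1 : ℤ)⟧)
    (hT : Triangle.mk u v w ∈ distTriang C) : B ∈ plusClosure S := by
  obtain ⟨Y, hY, m, ⟨e⟩⟩ := hA
  set p : ℤ := -((m + 1 : ℕ) : ℤ) with hp
  have hT' := Triangle.shift_distinguished _ hT p
  have hT'' := rot_of_distTriang _ hT'
  -- rotated shifted triangle: (X⟦p⟧, B⟦p⟧, (A⟦p⟧)⟦1⟧)
  refine ⟨B⟦p⟧, ?_, m + 1, ⟨?_⟩⟩
  · refine hext _ hT'' ?_ ?_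
    · exact negShiftMem S hiso hshift (m+1) X hX
    · -- obj₃ = (A⟦p⟧)⟦1⟧ ∈ S, since ≅ Y
      refine hiso Y _ ?_ hY
      calc Y ≅ (Y⟦(m : ℤ)⟧)⟦(-(m : ℤ))⟧ :=
              ((shiftFunctorCompIsoId C (m : ℤ) (-(m : ℤ)) (by ring)).app Y).symm
        _ ≅ (A)⟦(-(m : ℤ))⟧ := (shiftFunctor C (-(m : ℤ))).mapIso e.symm
        _ ≅ (A⟦p⟧)⟦(1 : ℤ)⟧ := (shiftFunctorAdd' C p 1 (-(m : ℤ)) (by push_cast [hp]; ring)).app A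
  · exact ((shiftFunctorCompIsoId C p ((m + 1 : ℕ) : ℤ) (by push_cast [hp]; ring)).app B).symm

include hzero in
lemma memRes (L : C) (hL : L ∈ S) : hasFiniteRes S L := by
  refine ⟨0, fun k => match k with | 0 => L | _ + 1 => 0, fun _ => L, rfl, isZero_zero C, ?_⟩
  rintro k hk
  interval_cases k
  exact ⟨hL, 0, 𝟙 L, 0, contractible_distinguished₁ L⟩

lemma isoRes {L L' : C} (e : L ≅ L') (hL : hasFiniteRes S L) : hasFiniteRes S L' := by
  obtain ⟨n, Ls, Xs, h0, hz, hk⟩ := hL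
  refine ⟨n, fun k => match k with | 0 => L' | k + 1 => Ls (k + 1), Xs, rfl, ?_, ?_⟩
  · match n with
    | n => exact hz
  · intro k hk'
    obtain ⟨hXk, u, v, w, hT⟩ := hk k hk'
    refine ⟨hXk, ?_⟩
    match k with
    | 0 =>
        have e' : Ls 0 ≅ L' := eqToIso h0 ≪≫ e
        exact ⟨u, v ≫ e'.hom, e'.inv ≫ w,
          isomorphic_distinguished _ hT _
            (Triangle.isoMk _ _ (Iso.refl _) (Iso.refl _) e'.symm (by exact (Category.comp_id u).trans (Category.id_comp u).symm) (by exact (by simp : (v ≫ e'.hom) ≫ e'.inv = v).trans (Category.id_comp v).symm) (by exact (congrArg (fun f => (e'.inv ≫ w) ≫ f) (CategoryTheory.Functor.map_id (shiftFunctor C (1 : ℤ)) (Ls (0 + 1)))).trans (Category.comp_id _)))⟩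
    | k + 1 => exact ⟨u, v, w, hT⟩

include hzero in
lemma shiftRes (M : C) (hM : hasFiniteRes S M) : hasFiniteRes S (M⟦(1 : ℤ)⟧) := by
  obtain ⟨n, Ls, Xs, h0, hz, hk⟩ := hM
  subst h0
  refine ⟨n + 1, fun k => match k with | 0 => (Ls 0)⟦(1 : ℤ)⟧ | k + 1 => Ls k,
    fun k => match k with | 0 => 0 | k + 1 => Xs k, rfl, hz, ?_⟩
  intro k hk'
  match k with
  | 0 =>
      exact ⟨hzero 0 (isZero_zero C), (0 : Ls 0 ⟶ 0), 0, 𝟙 _,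
        contractible_distinguished₂ (Ls 0)⟩
  | k + 1 =>
      obtain ⟨hXk, u, v, w, hT⟩ := hk k (by omega)
      exact ⟨hXk, u, v, w, hT⟩

end aux

/-- if `S` is resolving (extension closed, closed under `⟦-1⟧`, containing the
zero objects, closed under isomorphisms) and closed under direct summands, then `⟨S⟩₊`
coincides with the class of objects admitting a finite `S`-resolution. -/
theorem stmt8 (S : Set C)
    (hiso : ∀ (X Y : C), (X ≅ Y) → X ∈ S → Y ∈ S)
    (hzero : ∀ X : C, IsZero X → X ∈ S)
    (hext : ∀ T ∈ distTriang C, T.obj₁ ∈ S → T.obj₃ ∈ S → T.obj₂ ∈ S)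
    (hshift : ∀ X : C, X ∈ S → X⟦(-1 : ℤ)⟧ ∈ S)
    (hsum : ∀ (U V : C) (r : U ⟶ V) (s : V ⟶ U), s ≫ r = 𝟙 V → U ∈ S → V ∈ S) :
    plusClosure S = {L : C | hasFiniteRes S L} := by
  ext L
  constructor
  · rintro ⟨Y, hY, n, ⟨e⟩⟩
    refine isoRes S e.symm ?_
    clear e L
    induction n with
    | zero =>
        exact isoRes S ((shiftFunctorZero C ℤ).app Y).symm (memRes S hzero Y hY)
    | succ n ih =>
        refine isoRes S (e := ?_) (shiftRes S hzero _ ih)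
        exact ((shiftFunctorAdd' C (n : ℤ) 1 ((n+1 : ℕ) : ℤ) (by push_cast; ring)).app Y).symm
  · rintro ⟨n, Ls, Xs, h0, hz, hk⟩
    have key : ∀ d k, k + d = n + 1 → Ls k ∈ plusClosure S := by
      intro d
      induction d with
      | zero =>
          intro k hkd
          have : k = n + 1 := by omega
          subst this
          exact ⟨Ls (n + 1), hzero _ hz, 0, ⟨((shiftFunctorZero C ℤ).app _).symm ≪≫
            eqToIso (by norm_num)⟩⟩
      | succ d ih =>
          intro k hkd
          obtain ⟨hXk, u, v, w, hT⟩ := hk k (by omega)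
          exact keyStep S hiso hext hshift hXk (ih (k + 1) (by omega)) u v w hT
    have := key (n + 1) 0 (by omega)
    rwa [h0] at this
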